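/- Let 𝒢 be the set of nondecreasing right-continuous functions g : [0,1) → [0,1] with its Borel σ-algebra (induced by the L²([0,1])-metric), and let Q be a Borel probability measure on 𝒢 such that for every t ∈ (0,1), Q-almost every g is continuous at t. For N ≥ 2 let ℱ^N be the σ-algebra on 𝒢 generated by the evaluation maps g ↦ g(i/N), i = 1, …, N−1. Then for every u ∈ L²(𝒢, Q), the conditional expectations E[u | ℱ^N] converge to u in L²(𝒢, Q) as N → ∞. -/

import Mathlib

open Set MeasureTheory Filter Topology ENNReal

noncomputable section

instance : Fact ((1 : ℝ≥0∞) ≤ 2) := ⟨by norm_num⟩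

/-- Lebesgue measure on `[0,1)`. -/
def leb01 : Measure ℝ := volume.restrict (Ico (0:ℝ) 1)

/-- `g` is a nondecreasing right-continuous function `[0,1) → [0,1]`. -/
def GProp (g : ℝ → ℝ) : Prop :=
  MonotoneOn g (Ico (0:ℝ) 1) ∧
  (∀ t ∈ Ico (0:ℝ) 1, ContinuousWithinAt g (Ici t) t) ∧
  (∀ t ∈ Ico (0:ℝ) 1, g t ∈ Icc (0:ℝ) 1)

/-- `𝒢`, realized as the subspace of `L²([0,1], dx)` of classes possessing a
nondecreasing right-continuous `[0,1]`-valued representative; it carries the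
`L²`-metric topology. -/
abbrev G : Type := {f : Lp ℝ 2 leb01 // ∃ g : ℝ → ℝ, GProp g ∧ ⇑f =ᵐ[leb01] g}

instance : MeasurableSpace G := borel G

/-- The canonical nondecreasing right-continuous representative of an element of `𝒢`. -/
def rep (f : G) : ℝ → ℝ := f.2.choose

/-- The σ-algebra `ℱ^N` on `𝒢` generated by the evaluations `g ↦ g(i/N)`,
`i = 1, …, N-1`. -/
def FN (N : ℕ) : MeasurableSpace G :=
  MeasurableSpace.comap
    (fun f : G => fun i : Fin (N - 1) => rep f (((i : ℕ) + 1 : ℝ) / N)) inferInstance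

-- helpers
instance : BorelSpace G := ⟨rfl⟩

lemma gprop_rep (f : G) : GProp (rep f) := f.2.choose_spec.1

lemma coeFn_ae_rep (f : G) : ⇑(f : Lp ℝ 2 leb01) =ᵐ[leb01] rep f := f.2.choose_spec.2

instance : IsProbabilityMeasure leb01 :=
  ⟨by rw [leb01, Measure.restrict_apply_univ, Real.volume_Ico]; norm_num⟩

lemma leb01_restrict {S : Set ℝ} (hS : MeasurableSet S) (hsub : S ⊆ Ico (0:ℝ) 1) :
    leb01.restrict S = volume.restrict S := by
  rw [leb01, Measure.restrict_restrict hS, inter_eq_left.mpr hsub]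

lemma measurable_eval {t : ℝ} (ht : t ∈ Ioo (0:ℝ) 1) :
    Measurable (fun f : G => rep f t) := by
  have hcont : ∀ n : ℕ, Continuous (fun f : G =>
      ((n:ℝ)+1) * ∫ s in Ico t (t + 1/((n:ℝ)+1)), (f : Lp ℝ 2 leb01) s ∂leb01) := by
    intro n
    have : Continuous (fun f : Lp ℝ 2 leb01 =>
        ∫ s in Ico t (t + 1/((n:ℝ)+1)), f s ∂leb01) := by
      have hμs : leb01 (Ico t (t + 1/((n:ℝ)+1))) ≠ ∞ := measure_ne_top _ _
      have hrepr : ∀ f : Lp ℝ 2 leb01,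
          (inner (𝕜 := ℝ) (indicatorConstLp 2 measurableSet_Ico hμs (1:ℝ)) f)
            = ∫ s in Ico t (t + 1/((n:ℝ)+1)), f s ∂leb01 := by
        intro f
        rw [L2.inner_indicatorConstLp_eq_setIntegral_inner]
        simp [real_inner_comm]
      have := (innerSL ℝ (indicatorConstLp (μ := leb01) 2 measurableSet_Ico hμs (1:ℝ))).continuous
      refine Continuous.congr this ?_
      intro f; exact hrepr f
    exact (continuous_const.mul (this.comp continuous_subtype_val))
  apply measurable_of_tendsto_metrizable (fun n => (hcont n).measurable)
  rw [tendsto_pi_nhds]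
  intro f
  set g : ℝ → ℝ := rep f with hg
  obtain ⟨hmono, hrc, hmem⟩ := gprop_rep f
  -- eventual identity and bounds
  have hint : ∀ ε : ℝ, 0 < ε → t + ε < 1 →
      ∫ s in Ico t (t + ε), (f : Lp ℝ 2 leb01) s ∂leb01 = ∫ s in Ico t (t + ε), g s ∂volume ∧
      ε * g t ≤ ∫ s in Ico t (t + ε), g s ∂volume ∧
      ∫ s in Ico t (t + ε), g s ∂volume ≤ ε * g (t + ε) := by
    intro ε hε hlt
    have hsub : Ico t (t + ε) ⊆ Ico (0:ℝ) 1 := fun x hx =>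
      ⟨le_trans ht.1.le hx.1, lt_trans hx.2 hlt⟩
    have hrestr : leb01.restrict (Ico t (t+ε)) = volume.restrict (Ico t (t+ε)) :=
      leb01_restrict measurableSet_Ico hsub
    have heq1 : ∫ s in Ico t (t + ε), (f : Lp ℝ 2 leb01) s ∂leb01
        = ∫ s in Ico t (t + ε), g s ∂leb01 :=
      integral_congr_ae (coeFn_ae_rep f).restrict
    have hvol : volume (Ico t (t+ε)) = ENNReal.ofReal ε := by
      rw [Real.volume_Ico]; ring_nf
    have hfin : IsFiniteMeasure (volume.restrict (Ico t (t+ε))) := by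
      constructor
      rw [Measure.restrict_apply_univ, hvol]; exact ofReal_lt_top
    have hintg : IntegrableOn g (Ico t (t+ε)) volume := by
      constructor
      · have h1 : AEStronglyMeasurable g (leb01.restrict (Ico t (t+ε))) :=
          ((Lp.aestronglyMeasurable (f : Lp ℝ 2 leb01)).congr (coeFn_ae_rep f)).restrict
        rwa [hrestr] at h1
      · apply HasFiniteIntegral.of_bounded (C := 1)
        filter_upwards [ae_restrict_mem measurableSet_Ico] with x hx
        have := hmem x (hsub hx)
        rw [Real.norm_eq_abs, abs_le]; constructor <;> linarith [this.1, this.2]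
    have heq2 : ∫ s in Ico t (t + ε), g s ∂leb01 = ∫ s in Ico t (t + ε), g s ∂volume := by
      rw [show (∫ s in Ico t (t + ε), g s ∂leb01) = ∫ s, g s ∂(leb01.restrict (Ico t (t+ε))) from rfl,
        hrestr]
    refine ⟨heq1.trans heq2, ?_, ?_⟩
    · have := setIntegral_mono_on (f := fun _ => g t) (g := g) (μ := volume)
        (integrableOn_const (by rw [hvol]; exact ofReal_ne_top))
        hintg measurableSet_Ico
        (fun x hx => hmono ⟨ht.1.le, ht.2⟩ (hsub hx) hx.1)
      rwa [setIntegral_const, measureReal_def, hvol, ENNReal.toReal_ofReal hε.le, smul_eq_mul] at this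
    · have := setIntegral_mono_on (f := g) (g := fun _ => g (t+ε)) (μ := volume)
        hintg
        (integrableOn_const (by rw [hvol]; exact ofReal_ne_top))
        measurableSet_Ico
        (fun x hx => hmono (hsub hx) ⟨by linarith [ht.1], hlt⟩ hx.2.le)
      rwa [setIntegral_const, measureReal_def, hvol, ENNReal.toReal_ofReal hε.le, smul_eq_mul] at this
  -- squeeze
  have hev : ∀ᶠ n : ℕ in atTop, t + 1/((n:ℝ)+1) < 1 := by
    have h2 : Tendsto (fun n : ℕ => t + 1/((n:ℝ)+1)) atTop (𝓝 (t + 0)) :=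
      tendsto_const_nhds.add tendsto_one_div_add_atTop_nhds_zero_nat
    rw [add_zero] at h2
    exact h2.eventually (tendsto_id.eventually_lt_const ht.2) |>.mono (fun n hn => hn)
  have hposn : ∀ n : ℕ, (0:ℝ) < 1/((n:ℝ)+1) := by
    intro n; positivity
  have hlow : ∀ᶠ n : ℕ in atTop, g t ≤
      ((n:ℝ)+1) * ∫ s in Ico t (t + 1/((n:ℝ)+1)), (f : Lp ℝ 2 leb01) s ∂leb01 := by
    filter_upwards [hev] with n hn
    obtain ⟨he, hl, _⟩ := hint _ (hposn n) hn
    rw [he]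
    have hne : ((n:ℝ)+1) ≠ 0 := by positivity
    calc g t = ((n:ℝ)+1) * ((1/((n:ℝ)+1)) * g t) := by field_simp
    _ ≤ _ := by
        apply mul_le_mul_of_nonneg_left hl (by positivity)
  have hhigh : ∀ᶠ n : ℕ in atTop,
      ((n:ℝ)+1) * (∫ s in Ico t (t + 1/((n:ℝ)+1)), (f : Lp ℝ 2 leb01) s ∂leb01)
        ≤ g (t + 1/((n:ℝ)+1)) := by
    filter_upwards [hev] with n hn
    obtain ⟨he, _, hh⟩ := hint _ (hposn n) hn
    rw [he]
    have hne : ((n:ℝ)+1) ≠ 0 := by positivity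
    calc ((n:ℝ)+1) * (∫ s in Ico t (t + 1/((n:ℝ)+1)), g s ∂volume)
        ≤ ((n:ℝ)+1) * ((1/((n:ℝ)+1)) * g (t + 1/((n:ℝ)+1))) := by
          apply mul_le_mul_of_nonneg_left hh (by positivity)
    _ = g (t + 1/((n:ℝ)+1)) := by field_simp
  have hub : Tendsto (fun n : ℕ => g (t + 1/((n:ℝ)+1))) atTop (𝓝 (g t)) := by
    have hrct := hrc t ⟨ht.1.le, ht.2⟩
    have htend : Tendsto (fun n : ℕ => t + 1/((n:ℝ)+1)) atTop (𝓝[Ici t] t) := by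
      apply tendsto_nhdsWithin_of_tendsto_nhds_of_eventually_within
      · have h2 : Tendsto (fun n : ℕ => t + 1/((n:ℝ)+1)) atTop (𝓝 (t + 0)) :=
          tendsto_const_nhds.add tendsto_one_div_add_atTop_nhds_zero_nat
        rwa [add_zero] at h2
      · exact Eventually.of_forall (fun n => by
          simp only [mem_Ici]; linarith [hposn n])
    exact hrct.tendsto.comp htend
  exact tendsto_of_tendsto_of_tendsto_of_le_of_le' tendsto_const_nhds hub hlow hhigh
-- step machinery
def clamp01 (x : ℝ) : ℝ := max 0 (min 1 x)

lemma clamp01_mem (x : ℝ) : clamp01 x ∈ Icc (0:ℝ) 1 :=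
  ⟨le_max_left _ _, max_le (by norm_num) (min_le_left _ _)⟩

lemma clamp01_of_mem {x : ℝ} (hx : x ∈ Icc (0:ℝ) 1) : clamp01 x = x := by
  rw [clamp01, min_eq_right hx.2, max_eq_right hx.1]

lemma clamp01_lipschitz (x y : ℝ) : |clamp01 x - clamp01 y| ≤ |x - y| := by
  rw [clamp01, clamp01]
  calc |max 0 (min 1 x) - max 0 (min 1 y)| ≤ |min 1 x - min 1 y| := by
        rw [max_comm 0 (min 1 x), max_comm 0 (min 1 y)]; exact abs_max_sub_max_le_abs _ _ _
  _ ≤ max |1 - 1| |x - y| := abs_min_sub_min_le_max _ _ _ _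
  _ ≤ |x - y| := by simp

def mono01 {n : ℕ} (v : Fin (n+1) → ℝ) (j : Fin (n+1)) : ℝ :=
  (Finset.Iic j).sup' Finset.nonempty_Iic fun k => clamp01 (v k)

lemma mono01_mem {n : ℕ} (v : Fin (n+1) → ℝ) (j : Fin (n+1)) : mono01 v j ∈ Icc (0:ℝ) 1 := by
  constructor
  · exact le_trans (clamp01_mem (v j)).1
      (Finset.le_sup' (fun k => clamp01 (v k)) (Finset.mem_Iic.2 (le_refl j)))
  · exact Finset.sup'_le _ _ fun k _ => (clamp01_mem (v k)).2

lemma mono01_mono {n : ℕ} (v : Fin (n+1) → ℝ) : Monotone (mono01 v) := by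
  intro j j' h
  exact Finset.sup'_le _ _ fun k hk =>
    Finset.le_sup' (fun k => clamp01 (v k)) (Finset.mem_Iic.2 (le_trans (Finset.mem_Iic.1 hk) h))

lemma mono01_dist {n : ℕ} (v w : Fin (n+1) → ℝ) (j : Fin (n+1)) :
    |mono01 v j - mono01 w j| ≤ dist v w := by
  rw [abs_sub_le_iff]
  have key : ∀ a b : Fin (n+1) → ℝ, mono01 a j - mono01 b j ≤ dist a b := by
    intro a b
    rw [sub_le_iff_le_add]
    apply Finset.sup'_le
    intro k hk
    have h1 : clamp01 (a k) ≤ clamp01 (b k) + |a k - b k| := by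
      have := clamp01_lipschitz (a k) (b k); rw [abs_le] at this; linarith [this.1, this.2]
    have h2 : clamp01 (b k) ≤ mono01 b j := Finset.le_sup' (fun k => clamp01 (b k)) hk
    have h3 : |a k - b k| ≤ dist a b := by
      rw [← Real.dist_eq]; exact dist_le_pi_dist a b k
    linarith
  exact ⟨key v w, by rw [dist_comm]; exact key w v⟩

def stepIdx (n : ℕ) (t : ℝ) : Fin (n+1) :=
  ⟨min ⌊t * ((n:ℝ)+2)⌋₊ n, lt_of_le_of_lt (min_le_right _ _) (Nat.lt_succ_self n)⟩

lemma stepIdx_mono (n : ℕ) : Monotone (stepIdx n) := by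
  intro t t' h
  simp only [stepIdx, Fin.mk_le_mk]
  exact min_le_min (Nat.floor_mono (mul_le_mul_of_nonneg_right h (by positivity))) le_rfl

def stepFun {n : ℕ} (v : Fin (n+1) → ℝ) (t : ℝ) : ℝ := mono01 v (stepIdx n t)

lemma stepFun_mono {n : ℕ} (v : Fin (n+1) → ℝ) : Monotone (stepFun v) :=
  fun _ _ h => mono01_mono v (stepIdx_mono n h)

lemma stepFun_mem {n : ℕ} (v : Fin (n+1) → ℝ) (t : ℝ) : stepFun v t ∈ Icc (0:ℝ) 1 :=
  mono01_mem v _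

lemma stepIdx_eventually_const {n : ℕ} {t : ℝ} (ht : 0 ≤ t) :
    ∃ δ > 0, ∀ t' ∈ Ico t (t + δ), stepIdx n t' = stepIdx n t := by
  set Nr : ℝ := (n:ℝ) + 2 with hNr
  have hNpos : (0:ℝ) < Nr := by positivity
  set k : ℕ := ⌊t * Nr⌋₊ with hk
  refine ⟨((k:ℝ)+1)/Nr - t, ?_, ?_⟩
  · have h1 : t * Nr < (k:ℝ) + 1 := Nat.lt_floor_add_one _
    have h2 : t < ((k:ℝ)+1)/Nr := by rw [lt_div_iff₀ hNpos]; linarith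
    linarith
  · intro t' ht'
    have h1 : t ≤ t' := ht'.1
    have h2 : t' * Nr < (k:ℝ) + 1 := by
      have := ht'.2
      have : t' < ((k:ℝ)+1)/Nr := by linarith
      rw [lt_div_iff₀ hNpos] at this; linarith
    have hfl : ⌊t' * Nr⌋₊ = k := by
      have hub : ⌊t' * Nr⌋₊ < k + 1 := by
        rw [Nat.floor_lt (mul_nonneg (le_trans ht h1) hNpos.le)]; push_cast; linarith
      have hlb : k ≤ ⌊t' * Nr⌋₊ := Nat.floor_mono (by nlinarith)
      omega
    simp only [stepIdx, Fin.mk.injEq]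
    rw [hfl]
lemma stepFun_rc {n : ℕ} (v : Fin (n+1) → ℝ) {t : ℝ} (ht : 0 ≤ t) :
    ContinuousWithinAt (stepFun v) (Ici t) t := by
  obtain ⟨δ, hδ, hconst⟩ := stepIdx_eventually_const (n := n) ht
  have hmem : Ico t (t+δ) ∈ 𝓝[≥] t := Ico_mem_nhdsGE (by linarith)
  apply ContinuousWithinAt.congr_of_eventuallyEq
    (continuousWithinAt_const : ContinuousWithinAt (fun _ => stepFun v t) (Ici t) t) ?_ rfl
  filter_upwards [hmem] with x hx
  show stepFun v x = stepFun v t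
  simp only [stepFun]
  rw [hconst x hx]

lemma stepFun_memℒp {n : ℕ} (v : Fin (n+1) → ℝ) : MemLp (stepFun v) 2 leb01 := by
  apply MemLp.mono_exponent (q := ⊤) _ le_top
  apply memLp_top_of_bound
    ((stepFun_mono v).measurable.stronglyMeasurable.aestronglyMeasurable) 1
  apply ae_of_all
  intro x
  have := stepFun_mem v x
  rw [Real.norm_eq_abs, abs_le]; constructor <;> linarith [this.1, this.2]

def stepLp {n : ℕ} (v : Fin (n+1) → ℝ) : Lp ℝ 2 leb01 := (stepFun_memℒp v).toLp _

def stepG {n : ℕ} (v : Fin (n+1) → ℝ) : G :=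
  ⟨stepLp v, stepFun v,
    ⟨(stepFun_mono v).monotoneOn _, fun t ht => stepFun_rc v ht.1, fun t _ => stepFun_mem v t⟩,
    (stepFun_memℒp v).coeFn_toLp⟩

lemma lipschitz_stepLp {n : ℕ} : LipschitzWith 1 (stepLp (n := n)) := by
  apply LipschitzWith.of_dist_le_mul
  intro v w
  rw [NNReal.coe_one, one_mul, Lp.dist_def]
  have hae : ⇑(stepLp v) - ⇑(stepLp w) =ᵐ[leb01] stepFun v - stepFun w :=
    ((stepFun_memℒp v).coeFn_toLp).sub ((stepFun_memℒp w).coeFn_toLp)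
  rw [eLpNorm_congr_ae hae]
  have hbd : eLpNorm (stepFun v - stepFun w) 2 leb01 ≤ ENNReal.ofReal (dist v w) := by
    have := eLpNorm_le_of_ae_bound (μ := leb01) (p := 2) (f := stepFun v - stepFun w)
      (C := dist v w) (ae_of_all _ (fun t => by
        simp only [Pi.sub_apply, Real.norm_eq_abs]
        exact mono01_dist v w (stepIdx n t)))
    simpa [measure_univ] using this
  calc (eLpNorm (stepFun v - stepFun w) 2 leb01).toReal
      ≤ (ENNReal.ofReal (dist v w)).toReal := ENNReal.toReal_mono ofReal_ne_top hbd
  _ = dist v w := ENNReal.toReal_ofReal dist_nonneg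

lemma continuous_stepG {n : ℕ} : Continuous (stepG (n := n)) :=
  Continuous.subtype_mk lipschitz_stepLp.continuous _
-- FN is a sub-σ-algebra
def evalPts (N : ℕ) (f : G) : Fin (N - 1) → ℝ := fun i => rep f (((i : ℕ) + 1 : ℝ) / N)

lemma evalPts_mem {N : ℕ} (i : Fin (N-1)) : (((i:ℕ) + 1 : ℝ)/(N:ℝ)) ∈ Ioo (0:ℝ) 1 := by
  have hiN : (i : ℕ) < N - 1 := i.isLt
  have hN : 0 < N := by omega
  have hNR : (0:ℝ) < (N:ℝ) := by exact_mod_cast hN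
  constructor
  · positivity
  · rw [div_lt_one hNR]
    exact_mod_cast (by omega : (i:ℕ) + 1 < N)

lemma measurable_evalPts (N : ℕ) : Measurable (evalPts N) :=
  measurable_pi_lambda _ fun i => measurable_eval (evalPts_mem i)

lemma FN_le (N : ℕ) : FN N ≤ (inferInstance : MeasurableSpace G) := by
  rw [FN]
  exact measurable_iff_comap_le.mp (measurable_evalPts N)

def Phi (n : ℕ) (f : G) : G := stepG (evalPts (n+2) f)

lemma measurable_FN_Phi (n : ℕ) : Measurable[FN (n+2)] (Phi n) := by
  intro s hs
  exact ⟨stepG ⁻¹' s, continuous_stepG.measurable hs, rfl⟩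

lemma measurable_Phi (n : ℕ) : Measurable (Phi n) :=
  continuous_stepG.measurable.comp (measurable_evalPts (n+2))

lemma mono01_evalPts (n : ℕ) (f : G) (j : Fin (n+1)) :
    mono01 (evalPts (n+2) f) j = rep f ((((j:ℕ):ℝ) + 1)/(((n+2:ℕ):ℝ))) := by
  obtain ⟨hmono, _, hmem⟩ := gprop_rep f
  have hpt : ∀ k : Fin (n+1), ((((k:ℕ):ℝ)) + 1)/(((n+2:ℕ):ℝ)) ∈ Ico (0:ℝ) 1 := by
    intro k
    have := evalPts_mem (N := n+2) k
    exact ⟨this.1.le, this.2⟩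
  apply le_antisymm
  · apply Finset.sup'_le
    intro k hk
    have hkj : (k:ℕ) ≤ (j:ℕ) := Fin.le_def.mp (Finset.mem_Iic.1 hk)
    have hle : ((((k:ℕ):ℝ)) + 1)/(((n+2:ℕ):ℝ)) ≤ ((((j:ℕ):ℝ)) + 1)/(((n+2:ℕ):ℝ)) := by
      apply (div_le_div_iff_of_pos_right (by exact_mod_cast Nat.succ_pos (n+1) : (0:ℝ) < ((n+2:ℕ):ℝ))).mpr
      have : ((k:ℕ):ℝ) ≤ ((j:ℕ):ℝ) := by exact_mod_cast hkj
      linarith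
    show clamp01 (evalPts (n+2) f k) ≤ _
    rw [show evalPts (n+2) f k = rep f ((((k:ℕ):ℝ)+1)/((n+2:ℕ):ℝ)) from rfl,
      clamp01_of_mem (hmem _ (hpt k))]
    exact hmono (hpt k) (hpt j) hle
  · have h := Finset.le_sup' (fun k : Fin (n+1) => clamp01 (evalPts (n+2) f k))
      (Finset.mem_Iic.2 (le_refl j))
    rw [show evalPts (n+2) f j = rep f ((((j:ℕ):ℝ)+1)/((n+2:ℕ):ℝ)) from rfl,
      clamp01_of_mem (hmem _ (hpt j))] at h
    exact h

lemma tendsto_stepFun (f : G) {t : ℝ} (ht : t ∈ Ico (0:ℝ) 1) :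
    Tendsto (fun n : ℕ => stepFun (evalPts (n+2) f) t) atTop (𝓝 (rep f t)) := by
  obtain ⟨hmono, hrc, hmem⟩ := gprop_rep f
  set p : ℕ → ℝ := fun n => (((min ⌊t * ((n:ℝ)+2)⌋₊ n : ℕ):ℝ) + 1)/(((n+2:ℕ):ℝ)) with hp
  have hval : ∀ n : ℕ, stepFun (evalPts (n+2) f) t = rep f (p n) := by
    intro n
    rw [stepFun, mono01_evalPts]
    rfl
  have hflr : ∀ᶠ n : ℕ in atTop, ⌊t * ((n:ℝ)+2)⌋₊ ≤ n := by
    have hev : ∀ᶠ n : ℕ in atTop, 1/(1-t) ≤ ((n:ℝ)) := by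
      exact (tendsto_natCast_atTop_atTop (R := ℝ)).eventually_ge_atTop _
    filter_upwards [hev] with n hn
    have h1t : (0:ℝ) < 1 - t := by linarith [ht.2]
    have hlt : t * ((n:ℝ)+2) < (n:ℝ) + 1 := by
      have h2 : 1 < (1-t) * ((n:ℝ)+2) := by
        rw [div_le_iff₀ h1t] at hn
        nlinarith
      nlinarith
    have := Nat.floor_lt (mul_nonneg ht.1 (by positivity) : (0:ℝ) ≤ t * ((n:ℝ)+2)) |>.mpr
      (by push_cast; linarith : t * ((n:ℝ)+2) < ((n+1:ℕ):ℝ))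
    omega
  have hbounds : ∀ᶠ n : ℕ in atTop, t < p n ∧ p n ≤ t + 1/((n:ℝ)+2) := by
    filter_upwards [hflr] with n hn
    have hNpos : (0:ℝ) < (n:ℝ) + 2 := by positivity
    have hmin : min ⌊t * ((n:ℝ)+2)⌋₊ n = ⌊t * ((n:ℝ)+2)⌋₊ := min_eq_left hn
    have hcast : (((n+2:ℕ):ℝ)) = (n:ℝ) + 2 := by push_cast; ring
    have hfl1 : ((⌊t * ((n:ℝ)+2)⌋₊ : ℝ)) ≤ t * ((n:ℝ)+2) :=
      Nat.floor_le (mul_nonneg ht.1 (by positivity))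
    have hfl2 : t * ((n:ℝ)+2) < ((⌊t * ((n:ℝ)+2)⌋₊ : ℝ)) + 1 := Nat.lt_floor_add_one _
    constructor
    · rw [hp]
      simp only [hmin, hcast]
      rw [lt_div_iff₀ hNpos]
      nlinarith
    · rw [hp]
      simp only [hmin, hcast]
      rw [div_le_iff₀ hNpos]
      have : (t + 1/((n:ℝ)+2)) * ((n:ℝ)+2) = t * ((n:ℝ)+2) + 1 := by field_simp
      rw [this]
      linarith
  have htendp : Tendsto p atTop (𝓝[Ici t] t) := by
    apply tendsto_nhdsWithin_of_tendsto_nhds_of_eventually_within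
    · have hub : Tendsto (fun n : ℕ => t + 1/((n:ℝ)+2)) atTop (𝓝 (t + 0)) := by
        apply tendsto_const_nhds.add
        have h1 : Tendsto (fun n : ℕ => ((n:ℝ)+2)) atTop atTop :=
          tendsto_atTop_add_const_right _ 2 tendsto_natCast_atTop_atTop
        have h2 := h1.inv_tendsto_atTop; simp only [one_div]; exact h2
      rw [add_zero] at hub
      apply tendsto_of_tendsto_of_tendsto_of_le_of_le' tendsto_const_nhds hub
      · filter_upwards [hbounds] with n hn; exact hn.1.le
      · filter_upwards [hbounds] with n hn; exact hn.2
    · filter_upwards [hbounds] with n hn; exact mem_Ici.2 hn.1.le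
  have := (hrc t ht).tendsto.comp htendp
  apply this.congr
  intro n
  exact (hval n).symm

lemma leb01_ae_mem : ∀ᵐ x ∂leb01, x ∈ Ico (0: ℝ) 1 := by
  unfold leb01
  exact ae_restrict_mem measurableSet_Ico

lemma tendsto_eLpNorm_two_zero {α : Type*} {mα : MeasurableSpace α} {μ : Measure α}
    [IsFiniteMeasure μ] (h : ℕ → α → ℝ) (C : ℝ)
    (hm : ∀ n, AEStronglyMeasurable (h n) μ)
    (hb : ∀ n, ∀ᵐ x ∂μ, |h n x| ≤ C)
    (hp : ∀ᵐ x ∂μ, Tendsto (fun n => h n x) atTop (𝓝 0)) :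
    Tendsto (fun n => eLpNorm (h n) 2 μ) atTop (𝓝 0) := by
  have h2 : (fun n => eLpNorm (h n) 2 μ)
      = fun n => (∫⁻ x, ((‖h n x‖₊ : ℝ≥0∞)) ^ (2:ℝ) ∂μ) ^ (1/(2:ℝ)) := by
    funext n
    rw [eLpNorm_eq_lintegral_rpow_enorm_toReal (by norm_num) (by norm_num)]
    norm_num; rfl
  have hlim : Tendsto (fun n => ∫⁻ x, ((‖h n x‖₊ : ℝ≥0∞)) ^ (2:ℝ) ∂μ) atTop (𝓝 0) := by
    have h0 : (0:ℝ≥0∞) = ∫⁻ _x, (0:ℝ≥0∞) ∂μ := by simp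
    rw [h0]
    apply tendsto_lintegral_of_dominated_convergence'
      (bound := fun _ => ENNReal.ofReal (max C 0) ^ (2:ℝ))
    · intro n
      exact ENNReal.continuous_rpow_const.measurable.comp_aemeasurable
        ((hm n).aemeasurable.nnnorm.coe_nnreal_ennreal)
    · intro n
      filter_upwards [hb n] with x hx
      apply ENNReal.rpow_le_rpow _ (by norm_num)
      calc ((‖h n x‖₊ : ℝ≥0∞)) = ENNReal.ofReal |h n x| := by
            rw [← Real.norm_eq_abs, ofReal_norm]; rfl
      _ ≤ ENNReal.ofReal (max C 0) := ENNReal.ofReal_le_ofReal (le_trans hx (le_max_left _ _))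
    · rw [lintegral_const]
      exact ENNReal.mul_ne_top (ENNReal.rpow_ne_top_of_nonneg (by norm_num) ofReal_ne_top)
        (measure_ne_top μ _)
    · filter_upwards [hp] with x hx
      have h1 : Tendsto (fun n => ((‖h n x‖₊ : ℝ≥0∞))) atTop (𝓝 0) := by
        have := ENNReal.tendsto_coe.2 hx.nnnorm
        simpa using this
      have h3 := (ENNReal.continuous_rpow_const (y := (2:ℝ))).tendsto 0 |>.comp h1
      simpa [ENNReal.zero_rpow_of_pos, Function.comp_def] using h3
  rw [h2]
  have h4 := (ENNReal.continuous_rpow_const (y := (1/2:ℝ))).tendsto 0 |>.comp hlim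
  simpa [ENNReal.zero_rpow_of_pos, Function.comp_def] using h4

lemma tendsto_Phi (f : G) : Tendsto (fun n : ℕ => Phi n f) atTop (𝓝 f) := by
  rw [tendsto_subtype_rng]
  rw [tendsto_iff_dist_tendsto_zero]
  have hdist : (fun n : ℕ => dist ((Phi n f : G) : Lp ℝ 2 leb01) ((f : G) : Lp ℝ 2 leb01))
      = fun n : ℕ => (eLpNorm (stepFun (evalPts (n+2) f) - rep f) 2 leb01).toReal := by
    funext n
    rw [Lp.dist_def]
    congr 1
    apply eLpNorm_congr_ae
    exact ((stepFun_memℒp _).coeFn_toLp).sub (coeFn_ae_rep f)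
  have hE : Tendsto (fun n : ℕ => eLpNorm (stepFun (evalPts (n+2) f) - rep f) 2 leb01)
      atTop (𝓝 0) := by
    apply tendsto_eLpNorm_two_zero _ 1
    · intro n
      exact ((stepFun_mono _).measurable.stronglyMeasurable.aestronglyMeasurable).sub
        ((Lp.aestronglyMeasurable (f : Lp ℝ 2 leb01)).congr (coeFn_ae_rep f))
    · intro n
      filter_upwards [leb01_ae_mem] with x hx
      have h1 := stepFun_mem (evalPts (n+2) f) x
      have h2 := (gprop_rep f).2.2 x hx
      simp only [Pi.sub_apply]
      rw [abs_le]
      constructor <;> linarith [h1.1, h1.2, h2.1, h2.2]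
    · filter_upwards [leb01_ae_mem] with x hx
      have := (tendsto_stepFun f hx).sub_const (rep f x)
      simpa using this
  have hfin := (ENNReal.tendsto_toReal (by norm_num : (0:ℝ≥0∞) ≠ ⊤)).comp hE
  rw [hdist]
  simpa [Function.comp_def] using hfin
set_option synthInstance.maxHeartbeats 1000000 in
instance : NormalSpace G := inferInstance

-- L² contraction for conditional expectation
lemma eLpNorm_condexp_two_le {α : Type*} {m m0 : MeasurableSpace α} (hm : m ≤ m0)
    {μ : Measure α} [IsFiniteMeasure μ] {f : α → ℝ} (hf : MemLp f 2 μ) :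
    eLpNorm (μ[f|m]) 2 μ ≤ eLpNorm f 2 μ := by
  have hfi : Integrable f μ := hf.integrable one_le_two
  haveI : SigmaFinite (μ.trim hm) := by
    haveI := isFiniteMeasure_trim hm (μ := μ)
    infer_instance
  have heq : ((condExpL2 ℝ ℝ hm (hf.toLp f) : Lp ℝ 2 μ) : α → ℝ) =ᵐ[μ] μ[f|m] := by
    refine ae_eq_condExp_of_forall_setIntegral_eq hm hfi ?_ ?_ ?_
    · intro s _ hμs
      exact integrableOn_condExpL2_of_measure_ne_top hm hμs.ne _
    · intro s hs hμs
      rw [integral_condExpL2_eq hm (hf.toLp f) hs hμs.ne]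
      exact integral_congr_ae (hf.coeFn_toLp).restrict
    · exact aestronglyMeasurable_condExpL2 hm _
  calc eLpNorm (μ[f|m]) 2 μ
      = eLpNorm ((condExpL2 ℝ ℝ hm (hf.toLp f) : Lp ℝ 2 μ) : α → ℝ) 2 μ :=
        (eLpNorm_congr_ae heq).symm
  _ ≤ eLpNorm (hf.toLp f) 2 μ := eLpNorm_condExpL2_le hm _
  _ = eLpNorm f 2 μ := eLpNorm_congr_ae hf.coeFn_toLp

/-- If `Q` is a Borel probability measure on `𝒢` such that for each `t ∈ (0,1)`
`Q`-a.e. `g` is continuous at `t`, then `E[u | ℱ^N] → u` in `L²(𝒢, Q)` for every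
`u ∈ L²(𝒢, Q)`. -/
theorem condexp_eval_sigma_algebras_L2_convergence
    (Q : Measure G) [IsProbabilityMeasure Q]
    (hQ : ∀ t ∈ Ioo (0:ℝ) 1, ∀ᵐ f ∂Q, ContinuousWithinAt (rep f) (Ico (0:ℝ) 1) t)
    (u : G → ℝ) (hu : MemLp u 2 Q) :
    Tendsto (fun N => eLpNorm (Q[u|FN N] - u) 2 Q) atTop (𝓝 0) := by
  rw [ENNReal.tendsto_atTop_zero]
  intro ε hε
  set δ : ℝ≥0∞ := min (ε/4) 1 with hδdef
  have hδpos : 0 < δ := lt_min (ENNReal.div_pos hε.ne' (by norm_num)) zero_lt_one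
  have hδ0 : δ ≠ 0 := hδpos.ne'
  have h4δ : δ + δ + δ + δ ≤ ε := by
    have h1 : δ ≤ ε/4 := min_le_left _ _
    calc δ + δ + δ + δ ≤ ε/4 + ε/4 + ε/4 + ε/4 :=
          add_le_add (add_le_add (add_le_add h1 h1) h1) h1
    _ = 4 * (ε/4) := by ring
    _ ≤ ε := ENNReal.mul_div_le
  -- bounded continuous approximation of u
  haveI hwreg : Q.WeaklyRegular :=
    MeasureTheory.Measure.WeaklyRegular.of_pseudoMetrizableSpace_of_isFiniteMeasure Q
  obtain ⟨v, hv_close, hv_mem⟩ :=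
    hu.exists_boundedContinuous_eLpNorm_sub_le (by norm_num : (2:ℝ≥0∞) ≠ ∞) hδ0
  have hw_meas : ∀ n : ℕ, Measurable (fun f => v (Phi n f)) :=
    fun n => v.continuous.measurable.comp (measurable_Phi n)
  have hw_mem : ∀ n : ℕ, MemLp (fun f => v (Phi n f)) 2 Q := fun n =>
    MemLp.mono_exponent
      (memLp_top_of_bound ((hw_meas n).stronglyMeasurable.aestronglyMeasurable) ‖v‖
        (ae_of_all _ fun f => v.norm_coe_le_norm _)) le_top
  have hvdiff : Tendsto (fun n => eLpNorm (⇑v - fun f => v (Phi n f)) 2 Q) atTop (𝓝 0) := by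
    apply tendsto_eLpNorm_two_zero _ (2 * ‖v‖)
    · intro n
      exact (v.continuous.measurable.stronglyMeasurable.aestronglyMeasurable).sub
        ((hw_meas n).stronglyMeasurable.aestronglyMeasurable)
    · intro n
      apply ae_of_all; intro f
      simp only [Pi.sub_apply]
      calc |v f - v (Phi n f)| ≤ |v f| + |v (Phi n f)| := abs_sub _ _
      _ ≤ ‖v‖ + ‖v‖ := add_le_add
          (by rw [← Real.norm_eq_abs]; exact v.norm_coe_le_norm f)
          (by rw [← Real.norm_eq_abs]; exact v.norm_coe_le_norm _)
      _ = 2 * ‖v‖ := by ring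
    · apply ae_of_all; intro f
      have h1 := (v.continuous.tendsto f).comp (tendsto_Phi f)
      have h2 := tendsto_const_nhds (x := v f) (f := atTop (α := ℕ)) |>.sub h1
      simpa using h2
  obtain ⟨n₁, hn₁⟩ := ENNReal.tendsto_atTop_zero.mp hvdiff δ hδpos
  refine ⟨n₁ + 2, fun N hN => ?_⟩
  obtain ⟨n, rfl⟩ : ∃ n, N = n + 2 := ⟨N - 2, by omega⟩
  have hnn : n₁ ≤ n := by omega
  have hm : FN (n+2) ≤ (inferInstance : MeasurableSpace G) := FN_le (n+2)
  haveI : SigmaFinite (Q.trim hm) :=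
    @IsFiniteMeasure.toSigmaFinite _ _ _ (isFiniteMeasure_trim hm)
  set w : G → ℝ := fun f => v (Phi n f) with hwdef
  have hw_sm : StronglyMeasurable[FN (n+2)] w :=
    (v.continuous.measurable.comp (measurable_FN_Phi n)).stronglyMeasurable
  have hw_int : Integrable w Q := (hw_mem n).integrable one_le_two
  have hv_int : Integrable (⇑v) Q := hv_mem.integrable one_le_two
  have hu_int : Integrable u Q := hu.integrable one_le_two
  have hcond_w : Q[w|FN (n+2)] = w := condExp_of_stronglyMeasurable hm hw_sm hw_int
  have hdecomp : Q[u|FN (n+2)] - u =ᵐ[Q] Q[u - w|FN (n+2)] + (w - u) := by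
    have h1 : Q[u - w|FN (n+2)] =ᵐ[Q] Q[u|FN (n+2)] - Q[w|FN (n+2)] := condExp_sub hu_int hw_int _
    filter_upwards [h1] with f hf
    simp only [Pi.add_apply, Pi.sub_apply] at *
    rw [hf, hcond_w]
    ring
  have hmemuw : MemLp (u - w) 2 Q := hu.sub (hw_mem n)
  have haesm_uw : AEStronglyMeasurable (u - w) Q := hmemuw.aestronglyMeasurable
  have hkey : eLpNorm (Q[u|FN (n+2)] - u) 2 Q
      ≤ eLpNorm (Q[u - w|FN (n+2)]) 2 Q + eLpNorm (w - u) 2 Q := by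
    rw [eLpNorm_congr_ae hdecomp]
    exact eLpNorm_add_le ((stronglyMeasurable_condExp.mono hm).aestronglyMeasurable)
      (((hw_mem n).sub hu).aestronglyMeasurable) one_le_two
  have hcontr : eLpNorm (Q[u - w|FN (n+2)]) 2 Q ≤ eLpNorm (u - w) 2 Q :=
    eLpNorm_condexp_two_le hm hmemuw
  have hsplit : eLpNorm (u - w) 2 Q ≤ eLpNorm (u - ⇑v) 2 Q + eLpNorm (⇑v - w) 2 Q := by
    have hdec : u - w = (u - ⇑v) + (⇑v - w) := by
      funext f; simp only [Pi.add_apply, Pi.sub_apply]; ring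
    rw [hdec]
    exact eLpNorm_add_le (hu.sub hv_mem).aestronglyMeasurable
      (hv_mem.sub (hw_mem n)).aestronglyMeasurable one_le_two
  have hsub_comm : eLpNorm (w - u) 2 Q = eLpNorm (u - w) 2 Q := by
    rw [show w - u = -(u - w) from by funext f; simp only [Pi.neg_apply, Pi.sub_apply]; ring,
      eLpNorm_neg]
  have hvw : eLpNorm (⇑v - w) 2 Q ≤ δ := hn₁ n hnn
  have huw : eLpNorm (u - w) 2 Q ≤ δ + δ :=
    le_trans hsplit (add_le_add hv_close hvw)
  calc eLpNorm (Q[u|FN (n+2)] - u) 2 Q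
      ≤ eLpNorm (Q[u - w|FN (n+2)]) 2 Q + eLpNorm (w - u) 2 Q := hkey
  _ ≤ eLpNorm (u - w) 2 Q + eLpNorm (u - w) 2 Q := by
      rw [hsub_comm]; exact add_le_add hcontr le_rfl
  _ ≤ (δ + δ) + (δ + δ) := add_le_add huw huw
  _ = δ + δ + δ + δ := by ring
  _ ≤ ε := h4δ
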